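/- arXiv:2207.14790 — 3 statements merged into one kernel-verified Lean document; each statement's English description precedes it below -/
import Mathlib

section
/- Let \iota, a_0, a_1, a_2 be positive integers and let G be the 3×3 matrix with diagonal entries \iota - a_0, \iota - a_1, \iota - a_2 and all off-diagonal entries equal to \iota. Then G has rank at least two, and G has rank exactly two if and only if 1/\iota = 1/a_0 + 1/a_1 + 1/a_2. -/
theorem stmt_0 (ι a₀ a₁ a₂ : ℕ) (hι : 0 < ι) (h₀ : 0 < a₀) (h₁ : 0 < a₁) (h₂ : 0 < a₂)
    (G : Matrix (Fin 3) (Fin 3) ℚ)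
    (hG : G = !![(ι : ℚ) - a₀, ι, ι; ι, (ι : ℚ) - a₁, ι; ι, ι, (ι : ℚ) - a₂]) :
    2 ≤ G.rank ∧
      (G.rank = 2 ↔ (1 : ℚ) / ι = 1 / a₀ + 1 / a₁ + 1 / a₂) := by
  have hιQ : (ι : ℚ) ≠ 0 := Nat.cast_ne_zero.2 hι.ne'
  have h₀Q : (a₀ : ℚ) ≠ 0 := Nat.cast_ne_zero.2 h₀.ne'
  have h₁Q : (a₁ : ℚ) ≠ 0 := Nat.cast_ne_zero.2 h₁.ne'
  have h₂Q : (a₂ : ℚ) ≠ 0 := Nat.cast_ne_zero.2 h₂.ne'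
  -- rank ≥ 2 via E * G * F being an invertible 2×2 matrix
  have hrank2 : 2 ≤ G.rank := by
    set E : Matrix (Fin 2) (Fin 3) ℚ := !![1,0,0;0,1,0] with hE
    set F : Matrix (Fin 3) (Fin 2) ℚ := !![0,0;1,0;0,1] with hF
    have hEGF : E * G * F = !![(ι:ℚ), ι; (ι:ℚ) - a₁, ι] := by
      subst hG
      ext i j
      fin_cases i <;> fin_cases j <;>
        simp [hE, hF, Matrix.mul_apply, Fin.sum_univ_three]
    have hdet : (E * G * F).det ≠ 0 := by
      rw [hEGF, Matrix.det_fin_two_of]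
      have : (ι:ℚ) * ι - (ι:ℚ) * ((ι:ℚ) - a₁) = ι * a₁ := by ring
      rw [this]
      exact mul_ne_zero hιQ h₁Q
    have hunit : IsUnit (E * G * F) :=
      (Matrix.isUnit_iff_isUnit_det _).2 (isUnit_iff_ne_zero.2 hdet)
    have := Matrix.rank_of_isUnit _ hunit
    calc (2:ℕ) = (E * G * F).rank := by rw [this]; simp
    _ ≤ (E * G).rank := Matrix.rank_mul_le_left _ _
    _ ≤ G.rank := Matrix.rank_mul_le_right _ _
  refine ⟨hrank2, ?_⟩
  -- determinant computation
  have hdetG : G.det = (ι:ℚ) * (a₀*a₁ + a₁*a₂ + a₀*a₂) - a₀*a₁*a₂ := by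
    rw [hG, Matrix.det_fin_three]
    norm_num [Matrix.cons_val_zero, Matrix.cons_val_one, Matrix.head_cons,
      Matrix.cons_val_two, Matrix.tail_cons, Matrix.head_fin_const, Matrix.vecHead, Matrix.vecTail]
    ring
  have hcond : G.det = 0 ↔ (1 : ℚ) / ι = 1 / a₀ + 1 / a₁ + 1 / a₂ := by
    rw [hdetG]
    rw [div_add_div _ _ h₀Q h₁Q, div_add_div _ _ (mul_ne_zero h₀Q h₁Q) h₂Q,
      div_eq_div_iff hιQ (mul_ne_zero (mul_ne_zero h₀Q h₁Q) h₂Q)]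
    constructor <;> intro h <;> linarith [h]
  rw [← hcond]
  constructor
  · -- rank = 2 → det = 0
    intro hr
    by_contra hd
    have hunit : IsUnit G := (Matrix.isUnit_iff_isUnit_det _).2 (isUnit_iff_ne_zero.2 hd)
    have := Matrix.rank_of_isUnit _ hunit
    rw [hr] at this
    simp at this
  · -- det = 0 → rank = 2
    intro hd
    obtain ⟨v, hv, hGv⟩ := (Matrix.exists_mulVec_eq_zero_iff).2 hd
    have hker : v ∈ LinearMap.ker G.mulVecLin := by
      simpa [Matrix.mulVecLin] using hGv
    have hkerpos : 0 < Module.finrank ℚ (LinearMap.ker G.mulVecLin) := by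
      rw [Module.finrank_pos_iff_exists_ne_zero]
      exact ⟨⟨v, hker⟩, fun h => hv (by simpa using congrArg Subtype.val h)⟩
    have hrn := LinearMap.finrank_range_add_finrank_ker G.mulVecLin
    have : Module.finrank ℚ (Fin 3 → ℚ) = 3 := by simp
    rw [this] at hrn
    have hrle : G.rank ≤ 2 := by
      unfold Matrix.rank
      omega
    omega
end

section
/- Let l_0, ..., l_r be positive integers, d_0, ..., d_r integers, set m_i = d_i/l_i and m = m_0 + ... + m_r, and assume m ≠ 0. Define \ell = 1/l_0 + ... + 1/l_r - r + 1 and for i = 1,...,r define u_i = (r-1)m_i + \sum_{j ≠ i}(m_j/l_i - m_i/l_j), and let u_B = (1/m)(u_1, ..., u_r, \ell) ∈ \mathbb{Q}^{r+1}. Let v_0 = (-l_0, ..., -l_0, d_0) and, for i = 1, ..., r, let v_i ∈ \mathbb{Q}^{r+1} be the vector with l_i in position i, d_i in the last position, and 0 elsewhere. Then ⟨u_B, v_0⟩ = 1 - (r-1)l_0 and ⟨u_B, v_i⟩ = 1 for all i = 1, ..., r. -/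
theorem anti_sum {α : Type*} [Fintype α] [DecidableEq α] (F : α → α → ℚ)
    (h : ∀ i j, F i j = - F j i) :
    ∑ i, ∑ j ∈ Finset.univ.erase i, F i j = 0 := by
  have hdiag : ∀ i, F i i = 0 := fun i => by have := h i i; linarith
  have herase : ∀ i : α, ∑ j ∈ Finset.univ.erase i, F i j = ∑ j, F i j := by
    intro i
    rw [← Finset.add_sum_erase _ _ (Finset.mem_univ i), hdiag, zero_add]
  simp_rw [herase]
  have key : (∑ i, ∑ j, F i j) = - ∑ i, ∑ j, F i j := by
    calc ∑ i, ∑ j, F i j = ∑ i, ∑ j, -F j i :=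
          Finset.sum_congr rfl fun i _ => Finset.sum_congr rfl fun j _ => h i j
      _ = -∑ i, ∑ j, F j i := by simp
      _ = -∑ i, ∑ j, F i j := by conv_lhs => rw [Finset.sum_comm]
  linarith

theorem alg1 (mi li A B R : ℚ) (h : li ≠ 0) :
    ((R - 1) * mi + (A * (1 / li) - mi * B)) * li + (1 / li + B - R + 1) * (mi * li)
      = mi + A := by
  field_simp
  ring

theorem alg0 (m0 l0 A B R M u : ℚ) (h : l0 ≠ 0) (hM : M = m0 + A)
    (hu : u = (R - 1) * m0 + (A * (1 / l0) - m0 * B)) :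
    ((R - 1) * M - u) * (-l0) + (1 / l0 + B - R + 1) * (m0 * l0)
      = M * (1 - (R - 1) * l0) := by
  subst hM hu
  field_simp
  ring

open Matrix in
theorem stmt_9 (r : ℕ) (hr : 1 ≤ r) (l d : Fin (r + 1) → ℤ) (hl : ∀ i, 0 < l i)
    (m : Fin (r + 1) → ℚ) (hm : ∀ i, m i = (d i : ℚ) / (l i : ℚ))
    (M : ℚ) (hM : M = ∑ i, m i) (hMne : M ≠ 0)
    (ell : ℚ) (hell : ell = (∑ i, (1 : ℚ) / (l i : ℚ)) - r + 1)
    (uval : Fin (r + 1) → ℚ)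
    (huval : ∀ i, uval i = ((r : ℚ) - 1) * m i +
      ∑ j ∈ Finset.univ.erase i, ((m j / (l i : ℚ)) - (m i / (l j : ℚ))))
    (uB : Fin (r + 1) → ℚ)
    (huB : ∀ k : Fin (r + 1), uB k =
      if h : (k : ℕ) < r then uval ⟨(k : ℕ) + 1, by omega⟩ / M else ell / M)
    (v : Fin (r + 1) → Fin (r + 1) → ℚ)
    (hv0 : ∀ k : Fin (r + 1), v 0 k = if (k : ℕ) = r then (d 0 : ℚ) else -(l 0 : ℚ))
    (hvi : ∀ i : Fin (r + 1), i ≠ 0 → ∀ k : Fin (r + 1),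
      v i k = if (k : ℕ) = (i : ℕ) - 1 then (l i : ℚ)
        else if (k : ℕ) = r then (d i : ℚ) else 0) :
    uB ⬝ᵥ v 0 = 1 - ((r : ℚ) - 1) * (l 0 : ℚ) ∧
      ∀ i : Fin (r + 1), i ≠ 0 → uB ⬝ᵥ v i = 1 := by
  have hlq : ∀ i, (l i : ℚ) ≠ 0 := fun i => by
    have := hl i; exact_mod_cast this.ne'
  have hd : ∀ i, (d i : ℚ) = m i * (l i : ℚ) := fun i => by
    rw [hm i]; exact (div_mul_cancel₀ _ (hlq i)).symm
  -- rewrite uval in a convenient form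
  have huval' : ∀ i, uval i = ((r : ℚ) - 1) * m i +
      ((∑ j ∈ Finset.univ.erase i, m j) * (1 / (l i : ℚ)) -
        m i * (∑ j ∈ Finset.univ.erase i, (1 : ℚ) / (l j : ℚ))) := by
    intro i
    rw [huval i]
    congr 1
    have hstep : ∑ j ∈ Finset.univ.erase i, (m j / (l i : ℚ) - m i / (l j : ℚ))
        = ∑ j ∈ Finset.univ.erase i,
            (m j * (1 / (l i : ℚ)) - m i * ((1 : ℚ) / (l j : ℚ))) :=
      Finset.sum_congr rfl fun j _ => by ring
    rw [hstep, Finset.sum_sub_distrib, ← Finset.sum_mul, ← Finset.mul_sum]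
  have hMsplit : ∀ i : Fin (r+1), M = m i + ∑ j ∈ Finset.univ.erase i, m j := by
    intro i
    rw [hM, ← Finset.add_sum_erase _ m (Finset.mem_univ i)]
  have hellsplit : ∀ i : Fin (r+1), ell = 1 / (l i : ℚ) +
      (∑ j ∈ Finset.univ.erase i, (1 : ℚ) / (l j : ℚ)) - r + 1 := by
    intro i
    rw [hell, ← Finset.add_sum_erase _ _ (Finset.mem_univ i)]
  have hsum_uval : ∑ k, uval k = ((r : ℚ) - 1) * M := by
    simp_rw [huval]
    rw [Finset.sum_add_distrib, ← Finset.mul_sum, ← hM,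
      anti_sum (fun i j => m j / (l i : ℚ) - m i / (l j : ℚ)) (fun a b => by ring), add_zero]
  constructor
  · -- v 0 case
    have hdot : uB ⬝ᵥ v 0 = (∑ k : Fin r, uval k.succ) / M * (-(l 0 : ℚ)) + ell / M * (d 0 : ℚ) := by
      rw [dotProduct, Fin.sum_univ_castSucc]
      congr 1
      · rw [Finset.sum_div, Finset.sum_mul]
        refine Finset.sum_congr rfl fun k _ => ?_
        rw [huB, hv0]
        have hk : ((k.castSucc : Fin (r+1)) : ℕ) = (k : ℕ) := rfl
        rw [dif_pos (show ((k.castSucc : Fin (r+1)) : ℕ) < r from k.isLt),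
          if_neg (show ((k.castSucc : Fin (r+1)) : ℕ) ≠ r from k.isLt.ne)]
        congr 1
      · rw [huB, hv0]
        have h1 : ((Fin.last r : Fin (r+1)) : ℕ) = r := rfl
        rw [dif_neg (show ¬ ((Fin.last r : Fin (r+1)) : ℕ) < r from by rw [h1]; exact lt_irrefl r), if_pos h1]
    have hsucc : ∑ k : Fin r, uval k.succ = ((r : ℚ) - 1) * M - uval 0 := by
      have h1 := Fin.sum_univ_succ uval
      rw [hsum_uval] at h1
      linarith
    rw [hdot, hsucc]
    have key0 : (((r : ℚ) - 1) * M - uval 0) * (-(l 0 : ℚ)) + ell * (d 0 : ℚ)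
        = M * (1 - ((r : ℚ) - 1) * (l 0 : ℚ)) := by
      rw [hellsplit 0, hd 0]
      exact alg0 (m 0) _ _ _ _ M (uval 0) (hlq 0) (hMsplit 0) (huval' 0)
    calc (((r : ℚ) - 1) * M - uval 0) / M * (-(l 0 : ℚ)) + ell / M * (d 0 : ℚ)
        = ((((r : ℚ) - 1) * M - uval 0) * (-(l 0 : ℚ)) + ell * (d 0 : ℚ)) / M := by ring
      _ = M * (1 - ((r : ℚ) - 1) * (l 0 : ℚ)) / M := by rw [key0]
      _ = 1 - ((r : ℚ) - 1) * (l 0 : ℚ) := by field_simp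
  · intro i hi
    have hiv : 0 < (i : ℕ) := by
      rcases Nat.eq_zero_or_pos (i : ℕ) with h | h
      · exact absurd (Fin.val_injective (by simp [h])) hi
      · exact h
    have hilt : (i : ℕ) - 1 < r := by have := i.isLt; omega
    set k0 : Fin r := ⟨(i : ℕ) - 1, hilt⟩ with hk0
    have hdot : uB ⬝ᵥ v i = uval i / M * (l i : ℚ) + ell / M * (d i : ℚ) := by
      rw [dotProduct, Fin.sum_univ_castSucc]
      congr 1
      · rw [Finset.sum_eq_single k0]
        · have huBk : uB k0.castSucc = uval i / M := by
            rw [huB]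
            rw [dif_pos (show ((k0.castSucc : Fin (r+1)) : ℕ) < r from hilt)]
            have hidx : (⟨((k0.castSucc : Fin (r+1)) : ℕ) + 1, by
                have hcc : ((k0.castSucc : Fin (r+1)) : ℕ) = (i : ℕ) - 1 := rfl
                omega⟩ : Fin (r+1)) = i := by
              apply Fin.ext
              show (i : ℕ) - 1 + 1 = (i : ℕ)
              omega
            rw [hidx]
          rw [huBk, hvi i hi]
          have hk : ((k0.castSucc : Fin (r+1)) : ℕ) = (i : ℕ) - 1 := rfl
          rw [hk, if_pos rfl]
        · intro k _ hk
          rw [huB, hvi i hi]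
          have h1 : ((k.castSucc : Fin (r+1)) : ℕ) = (k : ℕ) := rfl
          have h2 : (k : ℕ) ≠ (i : ℕ) - 1 := fun h => hk (Fin.ext h)
          rw [if_neg (show ((k.castSucc : Fin (r+1)) : ℕ) ≠ (i : ℕ) - 1 from by rw [h1]; exact h2),
            if_neg (show ((k.castSucc : Fin (r+1)) : ℕ) ≠ r from k.isLt.ne), mul_zero]
        · intro h; exact absurd (Finset.mem_univ k0) h
      · rw [huB, hvi i hi]
        have h1 : ((Fin.last r : Fin (r+1)) : ℕ) = r := rfl
        rw [dif_neg (show ¬ ((Fin.last r : Fin (r+1)) : ℕ) < r from by rw [h1]; exact lt_irrefl r),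
          if_neg (show ((Fin.last r : Fin (r+1)) : ℕ) ≠ (i : ℕ) - 1 from by rw [h1]; exact hilt.ne'), if_pos h1]
    rw [hdot]
    have key : uval i * (l i : ℚ) + ell * (d i : ℚ) = M := by
      rw [huval' i, hellsplit i, hd i, hMsplit i]
      exact alg1 (m i) _ _ _ _ (hlq i)
    calc uval i / M * (l i : ℚ) + ell / M * (d i : ℚ)
        = (uval i * (l i : ℚ) + ell * (d i : ℚ)) / M := by ring
      _ = M / M := by rw [key]
      _ = 1 := div_self hMne
end

section
/- Let \iota^+, \iota^-, l_1, l_2, d_2, a be positive integers and b a negative integer with l_1, l_2 ≥ 2 and 0 < d_2 < l_2, and suppose l_2 divides a\iota^+ - l_1 d_2 and l_1 l_2 divides a\iota^+ - b\iota^-. Then the four columns of the matrix P = [[-1,-1,l_1,0],[-1,-1,0,l_2],[0, -(a\iota^+ - b\iota^-)/(l_1 l_2), (a\iota^+ - l_1 d_2)/l_2, d_2]] generate \mathbb{Q}^3 as a convex cone; in particular, l_1 l_2 v_{01} + l_2 v_1 + l_1 v_2 = a\iota^+ e_3 and l_1 l_2 v_{02} + l_2 v_1 + l_1 v_2 = b\iota^-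 e_3, where v_{01}, v_{02}, v_1, v_2 denote the columns of P and e_3 = (0,0,1). -/
theorem stmt_15 (ιp ιm l₁ l₂ d₂ a b : ℤ)
    (hιp : 0 < ιp) (hιm : 0 < ιm) (ha : 0 < a) (hb : b < 0)
    (hl₁ : 2 ≤ l₁) (hl₂ : 2 ≤ l₂) (hd₂ : 0 < d₂) (hd₂' : d₂ < l₂)
    (hdvd1 : l₂ ∣ (a * ιp - l₁ * d₂)) (hdvd2 : l₁ * l₂ ∣ (a * ιp - b * ιm))
    (v₀₁ v₀₂ v₁ v₂ : Fin 3 → ℚ)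
    (hv₀₁ : v₀₁ = ![-1, -1, 0])
    (hv₀₂ : v₀₂ = ![-1, -1, -(((a : ℚ) * ιp - b * ιm) / (l₁ * l₂))])
    (hv₁ : v₁ = ![(l₁ : ℚ), 0, ((a : ℚ) * ιp - l₁ * d₂) / l₂])
    (hv₂ : v₂ = ![0, (l₂ : ℚ), (d₂ : ℚ)]) :
    (∀ w : Fin 3 → ℚ, ∃ c : Fin 4 → ℚ, (∀ i, 0 ≤ c i) ∧
      w = c 0 • v₀₁ + c 1 • v₀₂ + c 2 • v₁ + c 3 • v₂) ∧
    ((l₁ * l₂ : ℚ) • v₀₁ + (l₂ : ℚ) • v₁ + (l₁ : ℚ) • v₂ = ((a : ℚ) * ιp) • ![0, 0, 1]) ∧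
    ((l₁ * l₂ : ℚ) • v₀₂ + (l₂ : ℚ) • v₁ + (l₁ : ℚ) • v₂ = ((b : ℚ) * ιm) • ![0, 0, 1]) := by
  have hl1 : (0:ℚ) < (l₁:ℚ) := by exact_mod_cast (by linarith : (0:ℤ) < l₁)
  have hl2 : (0:ℚ) < (l₂:ℚ) := by exact_mod_cast (by linarith : (0:ℤ) < l₂)
  have hap : (0:ℚ) < (a:ℚ) * ιp := by
    have : (0:ℤ) < a * ιp := mul_pos ha hιp
    exact_mod_cast this
  have hbm : ((b:ℚ) * ιm) < 0 := by
    have : b * ιm < 0 := mul_neg_of_neg_of_pos hb hιm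
    exact_mod_cast this
  have hl1' : (l₁:ℚ) ≠ 0 := ne_of_gt hl1
  have hl2' : (l₂:ℚ) ≠ 0 := ne_of_gt hl2
  have hap' : ((a:ℚ) * ιp) ≠ 0 := ne_of_gt hap
  have hbm' : ((b:ℚ) * ιm) ≠ 0 := ne_of_lt hbm
  have hb' : (b:ℚ) ≠ 0 := by exact_mod_cast hb.ne
  have him' : (ιm:ℚ) ≠ 0 := by exact_mod_cast hιm.ne'
  have ha' : (a:ℚ) ≠ 0 := by exact_mod_cast ha.ne'
  have hip' : (ιp:ℚ) ≠ 0 := by exact_mod_cast hιp.ne'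
  refine ⟨?_, ?_, ?_⟩
  · intro w
    set x := w 0 with hx
    set y := w 1 with hy
    set z := w 2 with hzz
    set t : ℚ := max (max (-x) (-y)) 0 with htdef
    have ht0 : 0 ≤ t := le_max_right _ _
    have hxt : 0 ≤ x + t := by
      have : -x ≤ t := le_trans (le_max_left _ _) (le_max_left _ _)
      linarith
    have hyt : 0 ≤ y + t := by
      have : -y ≤ t := le_trans (le_max_right _ _) (le_max_left _ _)
      linarith
    set Z : ℚ := ((x+t)/l₁)*(((a:ℚ)*ιp - l₁*d₂)/l₂) + ((y+t)/l₂)*d₂ with hZ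
    set u : ℚ := max (z - Z) 0 with hu
    set v : ℚ := max (Z - z) 0 with hv
    have hu0 : 0 ≤ u := le_max_right _ _
    have hv0 : 0 ≤ v := le_max_right _ _
    have hz : z = Z + u - v := by
      rcases le_total z Z with h | h
      · rw [hu, hv, max_eq_right (by linarith), max_eq_left (by linarith)]; ring
      · rw [hu, hv, max_eq_left (by linarith), max_eq_right (by linarith)]; ring
    have hA : 0 ≤ u / ((a:ℚ)*ιp) := div_nonneg hu0 hap.le
    have hB : 0 ≤ v / (-((b:ℚ)*ιm)) := div_nonneg hv0 (by linarith)
    have hxl : 0 ≤ (x+t)/l₁ := div_nonneg hxt hl1.le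
    have hyl : 0 ≤ (y+t)/l₂ := div_nonneg hyt hl2.le
    refine ⟨![t + (u / ((a:ℚ)*ιp))*(l₁*l₂), (v / (-((b:ℚ)*ιm)))*(l₁*l₂),
      (x+t)/l₁ + (u / ((a:ℚ)*ιp) + v / (-((b:ℚ)*ιm)))*l₂,
      (y+t)/l₂ + (u / ((a:ℚ)*ιp) + v / (-((b:ℚ)*ιm)))*l₁], ?_, ?_⟩
    · intro i
      fin_cases i
      · exact add_nonneg ht0 (mul_nonneg hA (by positivity))
      · exact mul_nonneg hB (by positivity)
      · exact add_nonneg hxl (mul_nonneg (add_nonneg hA hB) hl2.le)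
      · exact add_nonneg hyl (mul_nonneg (add_nonneg hA hB) hl1.le)
    · funext i
      fin_cases i
      · show x = _
        simp [hv₀₁, hv₀₂, hv₁, hv₂]
        field_simp
        ring
      · show y = _
        simp [hv₀₁, hv₀₂, hv₁, hv₂]
        field_simp
        ring
      · show z = _
        simp [hv₀₁, hv₀₂, hv₁, hv₂]
        rw [hz, hZ]
        field_simp
        ring
  · funext i
    fin_cases i <;> simp [hv₀₁, hv₁, hv₂] <;> (try field_simp) <;> ring
  · funext i
    fin_cases i <;> simp [hv₀₂, hv₁, hv₂] <;> (try field_simp) <;> ring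
end
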